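/- Let q ≥ 1, t ≥ 1, and let 𝒮_1, …, 𝒮_t be collections of 3-element subsets of {1,…,3q}. Let G be the graph with vertex set {r_1,…,r_t} ∪ {s_Y : Y a 3-element subset of {1,…,3q}} ∪ {x_1,…,x_{3q}}, with an edge between r_i and s_Y if and only if Y ∈ 𝒮_i, an edge between s_Y and x_w if and only if w ∈ Y, and no other edges. Color c(r_i) = 1 for all i, c(s_Y) = 2 for all Y, and c(x_w) = 3 for all w, and let M be the multiset containing color 1 with multiplicity 1, color 2 with multiplicity q, and color 3 with multiplicity 3q. Then (G, c, M) has a motif solution if and only if there exists i ∈ {1,…,t} such that 𝒮_i contains a subcollection 𝒯 with the property that every element of {1,…,3q} belongs to exactly one set of 𝒯. -/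

import Mathlib

/-- A motif solution of an instance `(G, c, M)`: a set `R` of vertices such that the
induced subgraph `G[R]` is connected and the multiset of colors of `R` equals `M`. -/
def IsMotifSolution {V C : Type*} (G : SimpleGraph V) (c : V → C) (M : Multiset C)
    (R : Finset V) : Prop :=
  (G.induce (R : Set V)).Connected ∧ Multiset.map c R.val = M

/-- Vertex set of Statement 11: the `r_i` (`Sum.inl i`), the `s_Y` for `Y` a 3-element
subset of `{1,…,3q}` (`Sum.inr (Sum.inl Y)`), and the `x_w` (`Sum.inr (Sum.inr w)`). -/
abbrev ccV (q t : ℕ) :=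
  Fin t ⊕ ({Y : Finset (Fin (3 * q)) // Y.card = 3} ⊕ Fin (3 * q))

/-- Edges of Statement 11: `r_i — s_Y` iff `Y ∈ 𝒮_i`, and `s_Y — x_w` iff `w ∈ Y`. -/
def ccRel (q t : ℕ) (S : Fin t → Finset (Finset (Fin (3 * q)))) (a b : ccV q t) : Prop :=
  (∃ (i : Fin t) (Y : {Y : Finset (Fin (3 * q)) // Y.card = 3}),
    a = Sum.inl i ∧ b = Sum.inr (Sum.inl Y) ∧ Y.val ∈ S i) ∨
  (∃ (Y : {Y : Finset (Fin (3 * q)) // Y.card = 3}) (w : Fin (3 * q)),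
    a = Sum.inr (Sum.inl Y) ∧ b = Sum.inr (Sum.inr w) ∧ w ∈ Y.val)

section Aux
variable {q t : ℕ} {S : Fin t → Finset (Finset (Fin (3 * q)))}

lemma walk_mem_closed {V : Type*} {G : SimpleGraph V} {C : Set V}
    (h : ∀ a b, G.Adj a b → a ∈ C → b ∈ C) {a b : V} (w : G.Walk a b) (ha : a ∈ C) :
    b ∈ C := by
  induction w with
  | nil => exact ha
  | cons adj _ ih => exact ih (h _ _ adj ha)

lemma adj_x {v : ccV q t} {w : Fin (3 * q)}
    (h : (SimpleGraph.fromRel (ccRel q t S)).Adj v (Sum.inr (Sum.inr w))) :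
    ∃ Y, v = Sum.inr (Sum.inl Y) ∧ w ∈ Y.val := by
  rw [SimpleGraph.fromRel_adj] at h
  obtain ⟨-, h | h⟩ := h <;> unfold ccRel at h <;>
    rcases h with ⟨i, Y, h1, h2, h3⟩ | ⟨Y, w', h1, h2, h3⟩ <;> simp_all

lemma adj_r {v : ccV q t} {i : Fin t}
    (h : (SimpleGraph.fromRel (ccRel q t S)).Adj v (Sum.inl i)) :
    ∃ Y, v = Sum.inr (Sum.inl Y) ∧ Y.val ∈ S i := by
  rw [SimpleGraph.fromRel_adj] at h
  obtain ⟨-, h | h⟩ := h <;> unfold ccRel at h <;>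
    rcases h with ⟨j, Y, h1, h2, h3⟩ | ⟨Y, w', h1, h2, h3⟩ <;> simp_all

lemma adj_s {v : ccV q t} {Y : {Y : Finset (Fin (3 * q)) // Y.card = 3}}
    (h : (SimpleGraph.fromRel (ccRel q t S)).Adj v (Sum.inr (Sum.inl Y))) :
    (∃ i, v = Sum.inl i ∧ Y.val ∈ S i) ∨ (∃ w, v = Sum.inr (Sum.inr w) ∧ w ∈ Y.val) := by
  rw [SimpleGraph.fromRel_adj] at h
  obtain ⟨-, h | h⟩ := h <;> unfold ccRel at h <;>
    rcases h with ⟨j, Z, h1, h2, h3⟩ | ⟨Z, w', h1, h2, h3⟩ <;> simp_all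

lemma adj_rs {i : Fin t} {Y : {Y : Finset (Fin (3 * q)) // Y.card = 3}}
    (h : Y.val ∈ S i) :
    (SimpleGraph.fromRel (ccRel q t S)).Adj (Sum.inl i) (Sum.inr (Sum.inl Y)) := by
  rw [SimpleGraph.fromRel_adj]
  exact ⟨by simp, Or.inl (Or.inl ⟨i, Y, rfl, rfl, h⟩)⟩

lemma adj_sx {w : Fin (3 * q)} {Y : {Y : Finset (Fin (3 * q)) // Y.card = 3}}
    (h : w ∈ Y.val) :
    (SimpleGraph.fromRel (ccRel q t S)).Adj (Sum.inr (Sum.inl Y)) (Sum.inr (Sum.inr w)) := by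
  rw [SimpleGraph.fromRel_adj]
  exact ⟨by simp, Or.inl (Or.inr ⟨Y, w, rfl, rfl, h⟩)⟩

end Aux

/-- With `c(r_i) = 1`, `c(s_Y) = 2`, `c(x_w) = 3` and
`M = {1¹, 2^q, 3^{3q}}`, the instance `(G, c, M)` has a motif solution iff some `𝒮_i`
contains a subcollection that exactly covers `{1, …, 3q}`. -/
theorem stmt_11 (q t : ℕ) (hq : 1 ≤ q) (ht : 1 ≤ t)
    (S : Fin t → Finset (Finset (Fin (3 * q))))
    (hS : ∀ i, ∀ Y ∈ S i, Y.card = 3) :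
    (∃ R : Finset (ccV q t),
      IsMotifSolution (SimpleGraph.fromRel (ccRel q t S))
        (Sum.elim (fun _ => (1 : ℕ)) (Sum.elim (fun _ => (2 : ℕ)) (fun _ => (3 : ℕ))))
        (Multiset.replicate 1 1 + Multiset.replicate q 2 + Multiset.replicate (3 * q) 3)
        R) ↔
    ∃ i : Fin t, ∃ T : Finset (Finset (Fin (3 * q))), T ⊆ S i ∧
      ∀ w : Fin (3 * q), ∃! Y, Y ∈ T ∧ w ∈ Y := by
  classical
  set G := SimpleGraph.fromRel (ccRel q t S) with hG
  set c : ccV q t → ℕ :=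
    Sum.elim (fun _ => (1 : ℕ)) (Sum.elim (fun _ => (2 : ℕ)) (fun _ => (3 : ℕ))) with hc
  set M : Multiset ℕ :=
    Multiset.replicate 1 1 + Multiset.replicate q 2 + Multiset.replicate (3 * q) 3 with hM
  constructor
  · rintro ⟨R, hconn, hmap⟩
    set I : Finset (Fin t) := Finset.univ.filter (fun i => Sum.inl i ∈ R) with hIdef
    set T' : Finset {Y : Finset (Fin (3 * q)) // Y.card = 3} :=
      Finset.univ.filter (fun Y => Sum.inr (Sum.inl Y) ∈ R) with hT'def
    set W : Finset (Fin (3 * q)) :=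
      Finset.univ.filter (fun w => Sum.inr (Sum.inr w) ∈ R) with hWdef
    have hcount : ∀ a : ℕ,
        (R.filter (fun v => a = c v)).card = Multiset.count a M := by
      intro a
      rw [← hmap, Multiset.count_map]
      rfl
    -- card of I
    have e1 : R.filter (fun v => (1 : ℕ) = c v) = I.image Sum.inl := by
      ext v; rcases v with i | (Y | w) <;> simp [hIdef, hc]
    have hI : I.card = 1 := by
      have h := hcount 1
      rw [e1, Finset.card_image_of_injective _ Sum.inl_injective] at h
      simpa [hM, Multiset.count_replicate] using h
    have e2 : R.filter (fun v => (2 : ℕ) = c v) =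
        T'.image (fun Y => Sum.inr (Sum.inl Y)) := by
      ext v; rcases v with i | (Y | w) <;> simp [hT'def, hc]
    have hT'card : T'.card = q := by
      have h := hcount 2
      rw [e2, Finset.card_image_of_injective _ (by intro a b hab; simpa using hab)] at h
      simpa [hM, Multiset.count_replicate] using h
    have e3 : R.filter (fun v => (3 : ℕ) = c v) =
        W.image (fun w => Sum.inr (Sum.inr w)) := by
      ext v; rcases v with i | (Y | w) <;> simp [hWdef, hc]
    have hWcard : W.card = 3 * q := by
      have h := hcount 3
      rw [e3, Finset.card_image_of_injective _ (by intro a b hab; simpa using hab)] at h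
      simpa [hM, Multiset.count_replicate] using h
    have hW : ∀ w, Sum.inr (Sum.inr w) ∈ R := by
      intro w
      have : W = Finset.univ := Finset.eq_univ_of_card _ (by simp [hWcard])
      have hw : w ∈ W := this ▸ Finset.mem_univ w
      simpa [hWdef] using hw
    obtain ⟨i, hIi⟩ := Finset.card_eq_one.mp hI
    have hiR : Sum.inl i ∈ R := by
      have : i ∈ I := hIi ▸ Finset.mem_singleton_self i
      simpa [hIdef] using this
    have huniq_r : ∀ j, Sum.inl j ∈ R → j = i := by
      intro j hj
      have : j ∈ I := by simp [hIdef, hj]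
      rw [hIi] at this; simpa using this
    -- coverage
    have hcov : ∀ w, ∃ Y, Y ∈ T' ∧ w ∈ Y.val := by
      intro w
      obtain ⟨p⟩ := hconn.preconnected ⟨Sum.inr (Sum.inr w), hW w⟩ ⟨Sum.inl i, hiR⟩
      cases p with
      | cons adj rest =>
        rename_i u
        have hadj : G.Adj (Sum.inr (Sum.inr w)) u.val := adj
        obtain ⟨Y, hY, hwY⟩ := adj_x hadj.symm
        refine ⟨Y, ?_, hwY⟩
        have := u.property
        rw [hY] at this
        simpa [hT'def] using this
    set f : Fin (3 * q) → ℕ := fun w => (T'.filter (fun Y => w ∈ Y.val)).card with hf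
    have hf1 : ∀ w, 1 ≤ f w := by
      intro w
      obtain ⟨Y, hYT, hwY⟩ := hcov w
      have : Y ∈ T'.filter (fun Y => w ∈ Y.val) := Finset.mem_filter.mpr ⟨hYT, hwY⟩
      exact Finset.card_pos.mpr ⟨Y, this⟩
    have hsum : ∑ w : Fin (3 * q), f w = 3 * q := by
      have step : ∀ w : Fin (3 * q), f w = ∑ Y ∈ T', if w ∈ Y.val then 1 else 0 := by
        intro w; rw [hf]; exact Finset.card_filter _ _
      calc ∑ w : Fin (3 * q), f w
          = ∑ w : Fin (3 * q), ∑ Y ∈ T', if w ∈ Y.val then 1 else 0 := by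
            exact Finset.sum_congr rfl (fun w _ => step w)
        _ = ∑ Y ∈ T', ∑ w : Fin (3 * q), if w ∈ Y.val then 1 else 0 := Finset.sum_comm
        _ = ∑ Y ∈ T', Y.val.card := by
            refine Finset.sum_congr rfl (fun Y _ => ?_)
            rw [← Finset.card_filter]
            congr 1
            exact Finset.filter_univ_mem _
        _ = ∑ Y ∈ T', 3 := Finset.sum_congr rfl (fun Y _ => Y.property)
        _ = T'.card * 3 := by rw [Finset.sum_const, smul_eq_mul]
        _ = 3 * q := by rw [hT'card, Nat.mul_comm]
    have hfe : ∀ w, f w = 1 := by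
      have h := (Finset.sum_eq_sum_iff_of_le
        (s := (Finset.univ : Finset (Fin (3 * q)))) (f := fun _ => (1 : ℕ)) (g := f)
        (fun w _ => hf1 w)).mp ?_
      · intro w; exact (h w (Finset.mem_univ w)).symm
      · rw [hsum]; simp
    have huniqY : ∀ w : Fin (3 * q), ∀ Y Z, Y ∈ T' → Z ∈ T' → w ∈ Y.val → w ∈ Z.val →
        Y = Z := by
      intro w Y Z hY hZ hwY hwZ
      obtain ⟨A, hA⟩ := Finset.card_eq_one.mp (hfe w)
      have h1 : Y ∈ T'.filter (fun Y => w ∈ Y.val) := Finset.mem_filter.mpr ⟨hY, hwY⟩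
      have h2 : Z ∈ T'.filter (fun Y => w ∈ Y.val) := Finset.mem_filter.mpr ⟨hZ, hwZ⟩
      rw [hA, Finset.mem_singleton] at h1 h2
      rw [h1, h2]
    refine ⟨i, T'.image Subtype.val, ?_, ?_⟩
    · -- T ⊆ S i
      intro Y0 hY0
      obtain ⟨Y, hYT', hYv⟩ := Finset.mem_image.mp hY0
      subst hYv
      by_contra hns
      have hYR : Sum.inr (Sum.inl Y) ∈ R := by
        have := hYT'; rw [hT'def] at this; simpa using this
      set C : Set (ccV q t) :=
        {v | v = Sum.inr (Sum.inl Y) ∨ ∃ w, v = Sum.inr (Sum.inr w) ∧ w ∈ Y.val} with hC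
      have hclosed : ∀ (a b : (R : Set (ccV q t))),
          (G.induce (R : Set (ccV q t))).Adj a b → a.val ∈ C → b.val ∈ C := by
        rintro a b hab (ha | ⟨w, ha, hw⟩)
        · have hadj : G.Adj (Sum.inr (Sum.inl Y)) b.val := by
            have : G.Adj a.val b.val := hab
            rwa [ha] at this
          rcases adj_s hadj.symm with ⟨j, hb, hYS⟩ | ⟨w, hb, hw⟩
          · exfalso
            have hbR : Sum.inl j ∈ R := by have := b.property; rwa [hb] at this
            exact hns (huniq_r j hbR ▸ hYS)
          · exact Or.inr ⟨w, hb, hw⟩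
        · have hadj : G.Adj (Sum.inr (Sum.inr w)) b.val := by
            have : G.Adj a.val b.val := hab
            rwa [ha] at this
          obtain ⟨Z, hb, hwZ⟩ := adj_x hadj.symm
          have hZT : Z ∈ T' := by
            have hbR : Sum.inr (Sum.inl Z) ∈ R := by have := b.property; rwa [hb] at this
            simp [hT'def, hbR]
          have : Z = Y := huniqY w Z Y hZT hYT' hwZ hw
          exact Or.inl (by rw [hb, this])
      obtain ⟨p⟩ := hconn.preconnected ⟨Sum.inr (Sum.inl Y), hYR⟩ ⟨Sum.inl i, hiR⟩
      have : (Sum.inl i : ccV q t) ∈ C :=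
        walk_mem_closed (C := {u : (R : Set (ccV q t)) | u.val ∈ C})
          hclosed p (Or.inl rfl)
      rcases this with h | ⟨w, h, -⟩ <;> simp at h
    · -- exact cover
      intro w
      obtain ⟨Y, hYT, hwY⟩ := hcov w
      refine ⟨Y.val, ⟨Finset.mem_image_of_mem _ hYT, hwY⟩, ?_⟩
      rintro Z0 ⟨hZ0, hwZ0⟩
      obtain ⟨Z, hZT', hZv⟩ := Finset.mem_image.mp hZ0
      subst hZv
      exact congrArg Subtype.val (huniqY w Z Y hZT' hYT hwZ0 hwY)
  · rintro ⟨i, T, hTS, hcov⟩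
    have hcard3 : ∀ Y ∈ T, Y.card = 3 := fun Y hY => hS i Y (hTS hY)
    set T' : Finset {Y : Finset (Fin (3 * q)) // Y.card = 3} :=
      T.subtype (fun Y => Y.card = 3) with hT'def
    have hmemT' : ∀ Y : {Y : Finset (Fin (3 * q)) // Y.card = 3}, Y ∈ T' ↔ Y.val ∈ T := by
      intro Y; simp [hT'def]
    have hfilT : ∀ w : Fin (3 * q), T.filter (fun Y => w ∈ Y) = {(hcov w).choose} := by
      intro w
      obtain ⟨⟨hYT, hwY⟩, huniq⟩ := (hcov w).choose_spec
      ext Z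
      simp only [Finset.mem_filter, Finset.mem_singleton]
      constructor
      · rintro ⟨hZT, hwZ⟩; exact huniq Z ⟨hZT, hwZ⟩
      · rintro rfl; exact ⟨hYT, hwY⟩
    have hTcard : T.card = q := by
      have hsum : ∑ Y ∈ T, Y.card = 3 * q := by
        calc ∑ Y ∈ T, Y.card
            = ∑ Y ∈ T, ∑ w : Fin (3 * q), if w ∈ Y then 1 else 0 := by
              refine Finset.sum_congr rfl (fun Y _ => ?_)
              rw [← Finset.card_filter]
              congr 1
              exact (Finset.filter_univ_mem _).symm
          _ = ∑ w : Fin (3 * q), ∑ Y ∈ T, if w ∈ Y then 1 else 0 := Finset.sum_comm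
          _ = ∑ w : Fin (3 * q), (1 : ℕ) := by
              refine Finset.sum_congr rfl (fun w _ => ?_)
              rw [← Finset.card_filter, hfilT w, Finset.card_singleton]
          _ = 3 * q := by simp
      have h3 : ∑ Y ∈ T, Y.card = T.card * 3 := by
        rw [Finset.sum_congr rfl hcard3, Finset.sum_const, smul_eq_mul]
      omega
    have hT'card : T'.card = q := by
      rw [hT'def, Finset.card_subtype, Finset.filter_true_of_mem hcard3, hTcard]
    set eS : {Y : Finset (Fin (3 * q)) // Y.card = 3} ↪ ccV q t :=
      ⟨fun Y => Sum.inr (Sum.inl Y), fun a b h => by simpa using h⟩ with heS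
    set eX : Fin (3 * q) ↪ ccV q t :=
      ⟨fun w => Sum.inr (Sum.inr w), fun a b h => by simpa using h⟩ with heX
    have d1 : Disjoint ({Sum.inl i} : Finset (ccV q t)) (T'.map eS) := by
      simp [Finset.disjoint_left, heS]
    have d2 : Disjoint (({Sum.inl i} : Finset (ccV q t)).disjUnion (T'.map eS) d1)
        (Finset.univ.map eX) := by
      rw [Finset.disjoint_right]
      intro v hv
      obtain ⟨w, -, rfl⟩ := Finset.mem_map.mp hv
      simp [heS, heX]
      exact fun x _ _ h => Sum.inl_ne_inr (Sum.inr.inj h)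
    refine ⟨(({Sum.inl i} : Finset (ccV q t)).disjUnion (T'.map eS) d1).disjUnion
      (Finset.univ.map eX) d2, ?_, ?_⟩
    · -- connectivity
      set R : Finset (ccV q t) := (({Sum.inl i} : Finset (ccV q t)).disjUnion
        (T'.map eS) d1).disjUnion (Finset.univ.map eX) d2 with hR
      have hiR : Sum.inl i ∈ R := by simp [hR]
      have hsR : ∀ Y, Y ∈ T' → Sum.inr (Sum.inl Y) ∈ R := by
        intro Y hY
        rw [hR]
        simp only [Finset.mem_disjUnion, Finset.mem_map]
        exact Or.inl (Or.inr ⟨Y, hY, rfl⟩)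
      have hxR : ∀ w, Sum.inr (Sum.inr w) ∈ R := by
        intro w
        rw [hR]
        simp only [Finset.mem_disjUnion, Finset.mem_map]
        exact Or.inr ⟨w, Finset.mem_univ w, rfl⟩
      have hreachS : ∀ (Y) (hY : Y ∈ T'),
          (G.induce (R : Set (ccV q t))).Reachable ⟨Sum.inr (Sum.inl Y), hsR Y hY⟩
            ⟨Sum.inl i, hiR⟩ := by
        intro Y hY
        have hadj : (G.induce (R : Set (ccV q t))).Adj ⟨Sum.inl i, hiR⟩
            ⟨Sum.inr (Sum.inl Y), hsR Y hY⟩ :=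
          adj_rs (hTS ((hmemT' Y).mp hY))
        exact (SimpleGraph.Adj.reachable hadj).symm
      have hreach : ∀ v : (R : Set (ccV q t)),
          (G.induce (R : Set (ccV q t))).Reachable v ⟨Sum.inl i, hiR⟩ := by
        intro v
        obtain ⟨val, hval⟩ := v
        rw [hR] at hval
        simp only [Finset.coe_disjUnion, Set.mem_union, Finset.mem_coe,
          Finset.mem_disjUnion, Finset.mem_singleton, Finset.mem_map] at hval
        rcases hval with (rfl | ⟨Y, hY, rfl⟩) | ⟨w, -, rfl⟩
        · exact SimpleGraph.Reachable.refl _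
        · exact hreachS Y hY
        · obtain ⟨Y0, ⟨hY0T, hwY0⟩, -⟩ := hcov w
          have hYT' : (⟨Y0, hcard3 Y0 hY0T⟩ : {Y : Finset (Fin (3 * q)) // Y.card = 3}) ∈ T' :=
            (hmemT' _).mpr hY0T
          have hadj : (G.induce ((R : Finset (ccV q t)) : Set (ccV q t))).Adj
              ⟨Sum.inr (Sum.inr w), hxR w⟩
              ⟨Sum.inr (Sum.inl ⟨Y0, hcard3 Y0 hY0T⟩), hsR _ hYT'⟩ :=
            (adj_sx (Y := ⟨Y0, hcard3 Y0 hY0T⟩) hwY0).symm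
          exact hadj.reachable.trans (hreachS _ hYT')
      rw [SimpleGraph.connected_iff]
      refine ⟨fun u v => (hreach u).trans (hreach v).symm, ⟨⟨Sum.inl i, hiR⟩⟩⟩
    · -- multiset
      have hval : ((({Sum.inl i} : Finset (ccV q t)).disjUnion (T'.map eS) d1).disjUnion
          (Finset.univ.map eX) d2).val
          = ({Sum.inl i} : Finset (ccV q t)).val + T'.val.map eS + Finset.univ.val.map eX :=
        rfl
      rw [hval]
      simp only [Multiset.map_add, Multiset.map_map, Finset.singleton_val,
        Multiset.map_singleton]
      have h1 : Multiset.map c {Sum.inl i} = Multiset.replicate 1 (1 : ℕ) := by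
        simp [hc, Multiset.replicate_one]
      have hcT : Multiset.card T'.val = q := hT'card
      have hcU : Multiset.card (Finset.univ.val : Multiset (Fin (3 * q))) = 3 * q := by
        simpa using Finset.card_fin (3 * q)
      rw [show (c ∘ ⇑eS) = Function.const _ (2 : ℕ) from rfl,
          show (c ∘ ⇑eX) = Function.const _ (3 : ℕ) from rfl,
          Multiset.map_const, Multiset.map_const, hcT, hcU]
      simp [hM, hc, Multiset.replicate_one]
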